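/- Assume q_∞ ≠ 1. If q_∞ · ∏_{H_i ∈ P} q_i ≠ 1 for every maximal family P ⊆ A of at least two mutually parallel lines, then A has no resonant bands, and consequently Ker(∇ : ℂ[RB(A)] → ℂ[ch(A)]) = 0. -/

import Mathlib

open scoped Classical

noncomputable section

abbrev Pt : Type := ℝ × ℝ

/-- An affine-linear functional `a*x + b*y + c` on `ℝ²` with nonzero linear part. -/
structure AffForm : Type where
  a : ℝ
  b : ℝ
  c : ℝ
  nondeg : a ≠ 0 ∨ b ≠ 0

namespace AffForm

def eval (f : AffForm) (p : Pt) : ℝ := f.a * p.1 + f.b * p.2 + f.c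

def line (f : AffForm) : Set Pt := {p | f.eval p = 0}

def Parallel (f g : AffForm) : Prop := f.a * g.b = f.b * g.a

end AffForm

variable {n : ℕ}

/-- An arrangement: at least two distinct affine lines, not all parallel. -/
def IsArrangement (α : Fin n → AffForm) : Prop :=
  2 ≤ n ∧ (∀ i j : Fin n, i ≠ j → (α i).line ≠ (α j).line) ∧
    ∃ i j : Fin n, ¬ (α i).Parallel (α j)

def complement (α : Fin n → AffForm) : Set Pt := {p | ∀ i, (α i).eval p ≠ 0}

/-- A chamber: a connected component of the complement of the union of the lines. -/
def IsChamber (α : Fin n → AffForm) (C : Set Pt) : Prop :=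
  ∃ p ∈ complement α, C = connectedComponentIn (complement α) p

/-- `Sep(C, C')`: the set of indices `i` such that `α i` is positive on one of `C, C'`
and negative on the other. -/
def SepSet (α : Fin n → AffForm) (C C' : Set Pt) : Finset (Fin n) :=
  Finset.univ.filter fun i =>
    ((∀ p ∈ C, 0 < (α i).eval p) ∧ (∀ p ∈ C', (α i).eval p < 0)) ∨
    ((∀ p ∈ C, (α i).eval p < 0) ∧ (∀ p ∈ C', 0 < (α i).eval p))

/-- `Δ(C, C') = ∏_{i ∈ Sep(C,C')} r i − ∏_{i ∈ Sep(C,C')} (r i)⁻¹`. -/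
def Delta (α : Fin n → AffForm) (r : Fin n → ℂ) (C C' : Set Pt) : ℂ :=
  (∏ i ∈ SepSet α C C', r i) - ∏ i ∈ SepSet α C C', (r i)⁻¹

/-- The open strip between two parallel lines `f.line` and `g.line`. -/
def Strip (f g : AffForm) : Set Pt :=
  {p | ∀ q ∈ g.line,
    (0 < f.eval p ∧ f.eval p < f.eval q) ∨ (f.eval q < f.eval p ∧ f.eval p < 0)}

/-- A band: the open strip between two parallel lines of the arrangement containing no
other line of the arrangement parallel to them. -/
def IsBand (α : Fin n → AffForm) (B : Set Pt) : Prop :=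
  ∃ i j : Fin n, i ≠ j ∧ (α i).Parallel (α j) ∧ B = Strip (α i) (α j) ∧
    ∀ k : Fin n, (α k).Parallel (α i) → (α k).line ∩ B = ∅

/-- The data of a band `B` bounded by the parallel lines `H i` and `H j`, together with its
two unbounded chambers `U1` (= `U_1(B)`) and `U2` (= `U_2(B)`). -/
def BandData (α : Fin n → AffForm) (i j : Fin n) (B U1 U2 : Set Pt) : Prop :=
  i ≠ j ∧ (α i).Parallel (α j) ∧ B = Strip (α i) (α j) ∧
  (∀ k : Fin n, (α k).Parallel (α i) → (α k).line ∩ B = ∅) ∧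
  IsChamber α U1 ∧ IsChamber α U2 ∧ U1 ⊆ B ∧ U2 ⊆ B ∧
  ¬ Bornology.IsBounded U1 ∧ ¬ Bornology.IsBounded U2 ∧ U1 ≠ U2

/-- `U1, U2` assign to each band its two unbounded chambers (one at each end). -/
def GoodLabel (α : Fin n → AffForm) (U1 U2 : Set Pt → Set Pt) : Prop :=
  ∀ B : Set Pt, IsBand α B →
    IsChamber α (U1 B) ∧ IsChamber α (U2 B) ∧ U1 B ⊆ B ∧ U2 B ⊆ B ∧
    ¬ Bornology.IsBounded (U1 B) ∧ ¬ Bornology.IsBounded (U2 B) ∧ U1 B ≠ U2 B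

/-- The standing wave `∇(B) = Σ_{C ⊆ B} Δ(U, C)·[C]` (relative to the unbounded
chamber `U` of `B`), an element of `ℂ[ch(A)]`. -/
def wave (α : Fin n → AffForm) (chambers : Finset (Set Pt)) (r : Fin n → ℂ)
    (U B : Set Pt) : Set Pt →₀ ℂ :=
  ∑ C ∈ chambers.filter (fun C => C ⊆ B), Finsupp.single C (Delta α r U C)

/-- The set `RB(A)` of resonant bands (a band `B` is resonant if `Δ(U_1(B), U_2(B)) = 0`). -/
abbrev RBt (α : Fin n → AffForm) (r : Fin n → ℂ) (U1 U2 : Set Pt → Set Pt) : Type :=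
  {B : Set Pt // IsBand α B ∧ Delta α r (U1 B) (U2 B) = 0}

/-- The linear map `∇ : ℂ[RB(A)] → ℂ[ch(A)]` extending `B ↦ ∇(B)`. -/
def nabla (α : Fin n → AffForm) (chambers : Finset (Set Pt)) (r : Fin n → ℂ)
    (U1 U2 : Set Pt → Set Pt) :
    (RBt α r U1 U2 →₀ ℂ) →ₗ[ℂ] (Set Pt →₀ ℂ) :=
  Finsupp.linearCombination ℂ fun B : RBt α r U1 U2 => wave α chambers r (U1 B.1) B.1

/-- A maximal family of at least two mutually parallel lines of the arrangement
(determining a multiple point on the line at infinity). -/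
def MaxParallelFamily (α : Fin n → AffForm) (P : Finset (Fin n)) : Prop :=
  2 ≤ P.card ∧ (∀ i ∈ P, ∀ j ∈ P, (α i).Parallel (α j)) ∧
    ∀ k : Fin n, (∃ i ∈ P, (α k).Parallel (α i)) → k ∈ P

namespace AffForm

theorem eval_continuous (f : AffForm) : Continuous f.eval := by
  unfold eval; fun_prop

theorem parallel_refl (f : AffForm) : f.Parallel f := mul_comm _ _

theorem parallel_symm {f g : AffForm} (h : f.Parallel g) : g.Parallel f := by
  unfold Parallel at *; linarith

theorem parallel_decomp {f g : AffForm} (h : f.Parallel g) :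
    ∃ l : ℝ, f.a = l * g.a ∧ f.b = l * g.b := by
  unfold Parallel at h
  rcases g.nondeg with ha | hb
  · exact ⟨f.a / g.a, by field_simp, by field_simp; linarith⟩
  · exact ⟨f.b / g.b, by field_simp; linarith, by field_simp⟩

theorem parallel_trans {f g k : AffForm} (h1 : f.Parallel g) (h2 : k.Parallel g) :
    f.Parallel k := by
  obtain ⟨l, hl1, hl2⟩ := parallel_decomp h1
  obtain ⟨m, hm1, hm2⟩ := parallel_decomp h2
  unfold Parallel; rw [hl1, hl2, hm1, hm2]; ring

theorem line_nonempty (g : AffForm) : g.line.Nonempty := by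
  rcases g.nondeg with ha | hb
  · refine ⟨(-g.c / g.a, 0), ?_⟩
    show g.eval _ = 0
    unfold eval; field_simp; ring
  · refine ⟨(0, -g.c / g.b), ?_⟩
    show g.eval _ = 0
    unfold eval; field_simp; ring

theorem eval_const_of_parallel {f g : AffForm} (h : f.Parallel g) {p q : Pt}
    (hp : p ∈ g.line) (hq : q ∈ g.line) : f.eval p = f.eval q := by
  obtain ⟨l, hl1, hl2⟩ := parallel_decomp h
  simp only [line, Set.mem_setOf_eq, eval] at hp hq ⊢
  rw [hl1, hl2] at *
  linear_combination l * hp - l * hq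

theorem eval_combo (f : AffForm) (p q : Pt) {a b : ℝ} (hab : a + b = 1) :
    f.eval (a • p + b • q) = a * f.eval p + b * f.eval q := by
  simp only [eval, Prod.fst_add, Prod.snd_add, Prod.smul_fst, Prod.smul_snd, smul_eq_mul]
  linear_combination (-f.c) * hab

theorem convex_eval_preimage (f : AffForm) {S : Set ℝ} (hS : Convex ℝ S) :
    Convex ℝ {p : Pt | f.eval p ∈ S} := by
  intro p hp q hq a b ha hb hab
  simp only [Set.mem_setOf_eq] at *
  rw [eval_combo f p q hab]
  have := hS hp hq ha hb hab
  simpa [smul_eq_mul] using this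

theorem sign_const {S : Set Pt} (hS : IsPreconnected S) (f : AffForm)
    (h : ∀ p ∈ S, f.eval p ≠ 0) {p q : Pt} (hp : p ∈ S) (hq : q ∈ S) :
    0 < f.eval p ↔ 0 < f.eval q := by
  have key : ∀ x ∈ S, ∀ y ∈ S, 0 < f.eval x → f.eval y < 0 → False := by
    intro x hx y hy hxp hyn
    have himg : IsPreconnected (f.eval '' S) := hS.image _ f.eval_continuous.continuousOn
    have h0 : (0:ℝ) ∈ f.eval '' S :=
      himg.ordConnected.out ⟨y, hy, rfl⟩ ⟨x, hx, rfl⟩ ⟨hyn.le, hxp.le⟩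
    obtain ⟨z, hz, hz0⟩ := h0
    exact h z hz hz0
  constructor
  · intro h1
    rcases (h q hq).lt_or_gt with h2 | h2
    · exact (key p hp q hq h1 h2).elim
    · exact h2
  · intro h1
    rcases (h p hp).lt_or_gt with h2 | h2
    · exact (key q hq p hp h1 h2).elim
    · exact h2

end AffForm

theorem strip_convex {f g : AffForm} (hpar : f.Parallel g) : Convex ℝ (Strip f g) := by
  obtain ⟨q0, hq0⟩ := g.line_nonempty
  have hconst : ∀ q ∈ g.line, f.eval q = f.eval q0 := fun q hq =>
    AffForm.eval_const_of_parallel hpar hq hq0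
  rcases lt_trichotomy (f.eval q0) 0 with h | h | h
  · have hB : Strip f g = {p | f.eval p ∈ Set.Ioo (f.eval q0) 0} := by
      ext p
      constructor
      · intro hp
        rcases hp q0 hq0 with ⟨h1, h2⟩ | ⟨h1, h2⟩
        · exact absurd (h1.trans h2) (by simp; linarith)
        · exact ⟨h1, h2⟩
      · intro hp q hq
        rw [hconst q hq]
        exact Or.inr ⟨hp.1, hp.2⟩
    rw [hB]; exact AffForm.convex_eval_preimage f (convex_Ioo _ _)
  · have hB : Strip f g = (∅ : Set Pt) := by
      rw [Set.eq_empty_iff_forall_notMem]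
      intro p hp
      rcases hp q0 hq0 with ⟨h1, h2⟩ | ⟨h1, h2⟩ <;> linarith
    rw [hB]; exact convex_empty
  · have hB : Strip f g = {p | f.eval p ∈ Set.Ioo 0 (f.eval q0)} := by
      ext p
      constructor
      · intro hp
        rcases hp q0 hq0 with ⟨h1, h2⟩ | ⟨h1, h2⟩
        · exact ⟨h1, h2⟩
        · exact absurd (h2.trans h) (by simp; linarith)
      · intro hp q hq
        rw [hconst q hq]
        exact Or.inl ⟨hp.1, hp.2⟩
    rw [hB]; exact AffForm.convex_eval_preimage f (convex_Ioo _ _)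

theorem strip_eval_bound {f g : AffForm} {q0 : Pt} (hq0 : q0 ∈ g.line) {p : Pt}
    (hp : p ∈ Strip f g) : |f.eval p| ≤ |f.eval q0| := by
  rcases hp q0 hq0 with ⟨h1, h2⟩ | ⟨h1, h2⟩
  · rw [abs_of_pos h1]
    exact h2.le.trans (le_abs_self _)
  · rw [abs_of_neg h2]
    linarith [neg_abs_le (f.eval q0)]

theorem chamber_props {α : Fin n → AffForm} {U : Set Pt} (h : IsChamber α U) :
    U.Nonempty ∧ U ⊆ complement α ∧ IsPreconnected U ∧
      ∀ p ∈ U, U = connectedComponentIn (complement α) p := by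
  obtain ⟨p0, hp0, rfl⟩ := h
  exact ⟨⟨p0, mem_connectedComponentIn hp0⟩, connectedComponentIn_subset _ _,
    isPreconnected_connectedComponentIn, fun p hp => connectedComponentIn_eq hp⟩


set_option maxHeartbeats 2000000 in
theorem sep_eq (α : Fin n → AffForm)
    (i j : Fin n) (hpar : (α i).Parallel (α j))
    (hnopar : ∀ k : Fin n, (α k).Parallel (α i) → (α k).line ∩ Strip (α i) (α j) = ∅)
    {C1 C2 : Set Pt} (h1 : IsChamber α C1) (h2 : IsChamber α C2)
    (hs1 : C1 ⊆ Strip (α i) (α j)) (hs2 : C2 ⊆ Strip (α i) (α j))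
    (hb1 : ¬ Bornology.IsBounded C1) (hb2 : ¬ Bornology.IsBounded C2) (hne : C1 ≠ C2) :
    SepSet α C1 C2 = Finset.univ.filter fun k => ¬ (α k).Parallel (α i) := by
  obtain ⟨⟨p1, hp1⟩, hsub1, hpre1, hcc1⟩ := chamber_props h1
  obtain ⟨⟨p2, hp2⟩, hsub2, hpre2, hcc2⟩ := chamber_props h2
  set B := Strip (α i) (α j) with hBdef
  have hBconv : Convex ℝ B := strip_convex hpar
  have hBpre : IsPreconnected B := hBconv.isPreconnected
  have hnz1 : ∀ k : Fin n, ∀ p ∈ C1, (α k).eval p ≠ 0 := fun k p hp => hsub1 hp k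
  have hnz2 : ∀ k : Fin n, ∀ p ∈ C2, (α k).eval p ≠ 0 := fun k p hp => hsub2 hp k
  have hnzB : ∀ k : Fin n, (α k).Parallel (α i) → ∀ p ∈ B, (α k).eval p ≠ 0 := by
    intro k hk p hp h0
    have hmem : p ∈ (α k).line ∩ B := ⟨h0, hp⟩
    rw [hnopar k hk] at hmem
    exact hmem
  obtain ⟨N, hNdef⟩ : ∃ N : ℝ, N = (α i).a ^ 2 + (α i).b ^ 2 := ⟨_, rfl⟩
  have hN : 0 < N := by
    rw [hNdef]
    rcases (α i).nondeg with h | h <;>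
      nlinarith [sq_nonneg (α i).a, sq_nonneg (α i).b, sq_pos_of_ne_zero h]
  obtain ⟨s, hsdef⟩ : ∃ s : Pt → ℝ, s = fun p => -(α i).b * p.1 + (α i).a * p.2 := ⟨_, rfl⟩
  obtain ⟨u, hudef⟩ : ∃ u : Pt → ℝ, u = fun p => (α i).a * p.1 + (α i).b * p.2 := ⟨_, rfl⟩
  obtain ⟨D, hDdef⟩ : ∃ D : Fin n → ℝ, D = fun k => (α k).b * (α i).a - (α k).a * (α i).b := ⟨_, rfl⟩
  obtain ⟨A, hAdef⟩ : ∃ A : Fin n → ℝ, A = fun k => (α k).a * (α i).a + (α k).b * (α i).b := ⟨_, rfl⟩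
  have hkey : ∀ (k : Fin n) (p : Pt),
      N * (α k).eval p = A k * u p + D k * s p + N * (α k).c := by
    intro k p
    simp only [hNdef, hsdef, hudef, hDdef, hAdef, AffForm.eval]
    ring
  have hD : ∀ k : Fin n, ¬ (α k).Parallel (α i) → D k ≠ 0 := by
    intro k hk h0
    apply hk
    show (α k).a * (α i).b = (α k).b * (α i).a
    simp only [hDdef] at h0
    linarith
  obtain ⟨q0, hq0⟩ := (α j).line_nonempty
  obtain ⟨M, hMdef⟩ : ∃ M : ℝ, M = |(α i).eval q0| + |(α i).c| := ⟨_, rfl⟩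
  have huB : ∀ p ∈ B, |u p| ≤ M := by
    intro p hp
    have hb := strip_eval_bound hq0 hp
    have he : u p = (α i).eval p - (α i).c := by
      simp only [hudef, AffForm.eval]; ring
    rw [he]
    have h3 : |(α i).eval p - (α i).c| ≤ |(α i).eval p - 0| + |0 - (α i).c| :=
      abs_sub_le _ 0 _
    simp only [sub_zero, zero_sub, abs_neg] at h3
    simp only [hMdef]
    linarith
  have hlarge : ∀ U : Set Pt, U ⊆ B → ¬ Bornology.IsBounded U →
      ∀ R : ℝ, ∃ p ∈ U, R < |s p| := by
    intro U hUB hub R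
    by_contra hcon
    push_neg at hcon
    apply hub
    rw [isBounded_iff_forall_norm_le]
    refine ⟨(|(α i).a| + |(α i).b|) * (M + R) / N, fun p hp => ?_⟩
    have hu := huB p (hUB hp)
    have hs := hcon p hp
    have hR0 : 0 ≤ R := (abs_nonneg _).trans hs
    have hM0 : 0 ≤ M := (abs_nonneg _).trans hu
    have hxid : N * p.1 = (α i).a * u p - (α i).b * s p := by
      simp only [hNdef, hsdef, hudef]; ring
    have hyid : N * p.2 = (α i).b * u p + (α i).a * s p := by
      simp only [hNdef, hsdef, hudef]; ring
    have hb1' : N * |p.1| ≤ (|(α i).a| + |(α i).b|) * (M + R) := by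
      have e1 : N * |p.1| = |N * p.1| := by rw [abs_mul, abs_of_pos hN]
      rw [e1, hxid]
      calc |(α i).a * u p - (α i).b * s p|
          ≤ |(α i).a * u p| + |(α i).b * s p| := by
            have := abs_sub_le ((α i).a * u p) 0 ((α i).b * s p)
            simpa using this
        _ = |(α i).a| * |u p| + |(α i).b| * |s p| := by rw [abs_mul, abs_mul]
        _ ≤ (|(α i).a| + |(α i).b|) * (M + R) := by
            nlinarith [abs_nonneg (α i).a, abs_nonneg (α i).b, abs_nonneg (u p),
              abs_nonneg (s p)]
    have hb2' : N * |p.2| ≤ (|(α i).a| + |(α i).b|) * (M + R) := by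
      have e1 : N * |p.2| = |N * p.2| := by rw [abs_mul, abs_of_pos hN]
      rw [e1, hyid]
      calc |(α i).b * u p + (α i).a * s p|
          ≤ |(α i).b * u p| + |(α i).a * s p| := abs_add_le _ _
        _ = |(α i).b| * |u p| + |(α i).a| * |s p| := by rw [abs_mul, abs_mul]
        _ ≤ (|(α i).a| + |(α i).b|) * (M + R) := by
            nlinarith [abs_nonneg (α i).a, abs_nonneg (α i).b, abs_nonneg (u p),
              abs_nonneg (s p)]
    have hnorm : ‖p‖ = max |p.1| |p.2| := by
      rw [Prod.norm_def]; simp [Real.norm_eq_abs]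
    rw [hnorm, le_div_iff₀ hN]
    rcases max_cases |p.1| |p.2| with ⟨he, _⟩ | ⟨he, _⟩ <;> rw [he] <;> nlinarith
  have hsign_up : ∀ U : Set Pt, IsPreconnected U →
      (∀ k : Fin n, ∀ p ∈ U, (α k).eval p ≠ 0) →
      U ⊆ B → (∀ R : ℝ, ∃ p ∈ U, R < s p) → ∀ k : Fin n, ¬ (α k).Parallel (α i) →
      ∀ p ∈ U, (0 < (α k).eval p ↔ 0 < D k) := by
    intro U hpre hnz hUB hup k hk p hp
    obtain ⟨X, hXdef⟩ : ∃ X : ℝ, X = |A k| * M + N * |(α k).c| + 1 := ⟨_, rfl⟩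
    have hAu : ∀ p' ∈ U, |A k * u p'| ≤ |A k| * M := by
      intro p' hp'
      rw [abs_mul]
      exact mul_le_mul_of_nonneg_left (huB p' (hUB hp')) (abs_nonneg _)
    have hNc : |N * (α k).c| = N * |(α k).c| := by
      rw [abs_mul, abs_of_pos hN]
    rcases (hD k hk).lt_or_gt with hC | hC
    · obtain ⟨p0, hp0, hs0⟩ := hup (X / (-(D k)))
      have hCpos : (0:ℝ) < -(D k) := by linarith
      have hDk0 : -(D k) ≠ 0 := ne_of_gt hCpos
      have hmul : -(D k) * (X / (-(D k))) = X := by rw [mul_comm]; exact div_mul_cancel₀ X hDk0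
      have h3 : X < -(D k) * s p0 := by
        have := mul_lt_mul_of_pos_left hs0 hCpos
        rw [hmul] at this
        exact this
      have hneg : (α k).eval p0 < 0 := by
        have hk0 := hkey k p0
        have ha1 := hAu p0 hp0
        have ha2 := le_abs_self (A k * u p0)
        have ha3 := le_abs_self (N * (α k).c)
        nlinarith [hNc, hXdef, hN]
      have hiff := AffForm.sign_const hpre (α k) (hnz k) hp hp0
      constructor
      · intro hpos
        exact absurd (hiff.mp hpos) (not_lt.mpr hneg.le)
      · intro h'
        exact absurd h' (not_lt.mpr hC.le)
    · obtain ⟨p0, hp0, hs0⟩ := hup (X / D k)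
      have hDk0 : D k ≠ 0 := ne_of_gt hC
      have hmul : D k * (X / D k) = X := by rw [mul_comm]; exact div_mul_cancel₀ X hDk0
      have h3 : X < D k * s p0 := by
        have := mul_lt_mul_of_pos_left hs0 hC
        rw [hmul] at this
        exact this
      have hpos : 0 < (α k).eval p0 := by
        have hk0 := hkey k p0
        have ha1 := hAu p0 hp0
        have ha2 := neg_abs_le (A k * u p0)
        have ha3 := neg_abs_le (N * (α k).c)
        nlinarith [hNc, hXdef, hN]
      have hiff := AffForm.sign_const hpre (α k) (hnz k) hp hp0
      exact ⟨fun _ => hC, fun _ => hiff.mpr hpos⟩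
  have hsign_dn : ∀ U : Set Pt, IsPreconnected U →
      (∀ k : Fin n, ∀ p ∈ U, (α k).eval p ≠ 0) →
      U ⊆ B → (∀ R : ℝ, ∃ p ∈ U, s p < R) → ∀ k : Fin n, ¬ (α k).Parallel (α i) →
      ∀ p ∈ U, (0 < (α k).eval p ↔ D k < 0) := by
    intro U hpre hnz hUB hdn k hk p hp
    obtain ⟨X, hXdef⟩ : ∃ X : ℝ, X = |A k| * M + N * |(α k).c| + 1 := ⟨_, rfl⟩
    have hAu : ∀ p' ∈ U, |A k * u p'| ≤ |A k| * M := by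
      intro p' hp'
      rw [abs_mul]
      exact mul_le_mul_of_nonneg_left (huB p' (hUB hp')) (abs_nonneg _)
    have hNc : |N * (α k).c| = N * |(α k).c| := by
      rw [abs_mul, abs_of_pos hN]
    rcases (hD k hk).lt_or_gt with hC | hC
    · obtain ⟨p0, hp0, hs0⟩ := hdn (-(X / (-(D k))))
      have hCpos : (0:ℝ) < -(D k) := by linarith
      have hDk0 : -(D k) ≠ 0 := ne_of_gt hCpos
      have hmul : -(D k) * (X / (-(D k))) = X := by rw [mul_comm]; exact div_mul_cancel₀ X hDk0
      have h3 : X < D k * s p0 := by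
        have h4 := mul_lt_mul_of_pos_left hs0 hCpos
        have h5 : -(D k) * -(X / (-(D k))) = -X := by rw [mul_neg, hmul]
        rw [h5] at h4
        nlinarith
      have hpos : 0 < (α k).eval p0 := by
        have hk0 := hkey k p0
        have ha1 := hAu p0 hp0
        have ha2 := neg_abs_le (A k * u p0)
        have ha3 := neg_abs_le (N * (α k).c)
        nlinarith [hNc, hXdef, hN]
      have hiff := AffForm.sign_const hpre (α k) (hnz k) hp hp0
      exact ⟨fun _ => hC, fun _ => hiff.mpr hpos⟩
    · obtain ⟨p0, hp0, hs0⟩ := hdn (-(X / D k))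
      have hDk0 : D k ≠ 0 := ne_of_gt hC
      have hmul : D k * (X / D k) = X := by rw [mul_comm]; exact div_mul_cancel₀ X hDk0
      have h3 : D k * s p0 < -X := by
        have h4 := mul_lt_mul_of_pos_left hs0 hC
        have h5 : D k * -(X / D k) = -X := by rw [mul_neg, hmul]
        rw [h5] at h4
        exact h4
      have hneg : (α k).eval p0 < 0 := by
        have hk0 := hkey k p0
        have ha1 := hAu p0 hp0
        have ha2 := le_abs_self (A k * u p0)
        have ha3 := le_abs_self (N * (α k).c)
        nlinarith [hNc, hXdef, hN]
      have hiff := AffForm.sign_const hpre (α k) (hnz k) hp hp0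
      constructor
      · intro hpos
        exact absurd (hiff.mp hpos) (not_lt.mpr hneg.le)
      · intro h'
        exact absurd h' (not_lt.mpr hC.le)
  have hUD : ∀ U : Set Pt, U ⊆ B → ¬ Bornology.IsBounded U →
      (∀ R : ℝ, ∃ p ∈ U, R < s p) ∨ (∀ R : ℝ, ∃ p ∈ U, s p < R) := by
    intro U hUB hub
    by_contra hcon
    push_neg at hcon
    obtain ⟨⟨R1, hR1⟩, ⟨R2, hR2⟩⟩ := hcon
    obtain ⟨p, hp, hps⟩ := hlarge U hUB hub (|R1| + |R2|)
    have hr1 := hR1 p hp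
    have hr2 := hR2 p hp
    rcases abs_cases (s p) with ⟨he, _⟩ | ⟨he, _⟩ <;>
      rw [he] at hps <;>
      linarith [le_abs_self R1, le_abs_self R2, neg_abs_le R1, neg_abs_le R2]
  have hparsign : ∀ k : Fin n, (α k).Parallel (α i) →
      (0 < (α k).eval p1 ↔ 0 < (α k).eval p2) :=
    fun k hk => AffForm.sign_const hBpre (α k) (hnzB k hk) (hs1 hp1) (hs2 hp2)
  have hsame : (∀ k : Fin n, (0 < (α k).eval p1 ↔ 0 < (α k).eval p2)) → False := by
    intro hall
    obtain ⟨T, hTdef⟩ : ∃ T : Set Pt,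
        T = ⋂ m : Fin n, {p : Pt | ((0 : ℝ) < (α m).eval p ∧ 0 < (α m).eval p1) ∨
        ((α m).eval p < 0 ∧ (α m).eval p1 < 0)} := ⟨_, rfl⟩
    have hTconv : Convex ℝ T := by
      rw [hTdef]
      apply convex_iInter
      intro m
      rcases (hnz1 m p1 hp1).lt_or_gt with hm | hm
      · have he : {p : Pt | ((0 : ℝ) < (α m).eval p ∧ 0 < (α m).eval p1) ∨
            ((α m).eval p < 0 ∧ (α m).eval p1 < 0)} =
            {p : Pt | (α m).eval p ∈ Set.Iio 0} := by
          ext p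
          simp only [Set.mem_setOf_eq, Set.mem_Iio]
          constructor
          · rintro (⟨_, h'⟩ | ⟨h', _⟩)
            · linarith
            · exact h'
          · intro h'
            exact Or.inr ⟨h', hm⟩
        rw [he]
        exact AffForm.convex_eval_preimage _ (convex_Iio 0)
      · have he : {p : Pt | ((0 : ℝ) < (α m).eval p ∧ 0 < (α m).eval p1) ∨
            ((α m).eval p < 0 ∧ (α m).eval p1 < 0)} =
            {p : Pt | (α m).eval p ∈ Set.Ioi 0} := by
          ext p
          simp only [Set.mem_setOf_eq, Set.mem_Ioi]
          constructor
          · rintro (⟨h', _⟩ | ⟨_, h'⟩)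
            · exact h'
            · linarith
          · intro h'
            exact Or.inl ⟨h', hm⟩
        rw [he]
        exact AffForm.convex_eval_preimage _ (convex_Ioi 0)
    have hTsub : T ⊆ complement α := by
      intro p hp m
      rw [hTdef] at hp
      rcases Set.mem_iInter.mp hp m with ⟨h', _⟩ | ⟨h', _⟩
      · exact ne_of_gt h'
      · exact ne_of_lt h'
    have hp1T : p1 ∈ T := by
      rw [hTdef]
      apply Set.mem_iInter.mpr
      intro m
      rcases (hnz1 m p1 hp1).lt_or_gt with hm | hm
      · exact Or.inr ⟨hm, hm⟩
      · exact Or.inl ⟨hm, hm⟩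
    have hp2T : p2 ∈ T := by
      rw [hTdef]
      apply Set.mem_iInter.mpr
      intro m
      rcases (hnz1 m p1 hp1).lt_or_gt with hm | hm
      · refine Or.inr ⟨?_, hm⟩
        rcases (hnz2 m p2 hp2).lt_or_gt with hm2 | hm2
        · exact hm2
        · exact absurd ((hall m).mpr hm2) (not_lt.mpr hm.le)
      · exact Or.inl ⟨(hall m).mp hm, hm⟩
    have hTC1 : T ⊆ C1 := by
      rw [hcc1 p1 hp1]
      exact hTconv.isPreconnected.subset_connectedComponentIn hp1T hTsub
    have hp2C1 : p2 ∈ C1 := hTC1 hp2T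
    apply hne
    rw [hcc1 p2 hp2C1, hcc2 p2 hp2]
  rcases hUD C1 hs1 hb1 with hm1 | hm1 <;> rcases hUD C2 hs2 hb2 with hm2 | hm2
  · exact absurd (fun k => by
      by_cases hk : (α k).Parallel (α i)
      · exact hparsign k hk
      · exact (hsign_up C1 hpre1 hnz1 hs1 hm1 k hk p1 hp1).trans
          (hsign_up C2 hpre2 hnz2 hs2 hm2 k hk p2 hp2).symm) hsame
  · ext k
    simp only [SepSet, Finset.mem_filter, Finset.mem_univ, true_and]
    constructor
    · rintro (⟨hpos, hneg⟩ | ⟨hneg, hpos⟩) hk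
      · exact absurd ((hparsign k hk).mp (hpos p1 hp1)) (not_lt.mpr (hneg p2 hp2).le)
      · exact absurd ((hparsign k hk).mpr (hpos p2 hp2)) (not_lt.mpr (hneg p1 hp1).le)
    · intro hk
      have hu := hsign_up C1 hpre1 hnz1 hs1 hm1 k hk
      have hd := hsign_dn C2 hpre2 hnz2 hs2 hm2 k hk
      rcases (hD k hk).lt_or_gt with hC | hC
      · refine Or.inr ⟨fun p hp => ?_, fun p hp => (hd p hp).mpr hC⟩
        rcases (hnz1 k p hp).lt_or_gt with h' | h'
        · exact h'
        · exact absurd ((hu p hp).mp h') (not_lt.mpr hC.le)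
      · refine Or.inl ⟨fun p hp => (hu p hp).mpr hC, fun p hp => ?_⟩
        rcases (hnz2 k p hp).lt_or_gt with h' | h'
        · exact h'
        · exact absurd ((hd p hp).mp h') (not_lt.mpr hC.le)
  · ext k
    simp only [SepSet, Finset.mem_filter, Finset.mem_univ, true_and]
    constructor
    · rintro (⟨hpos, hneg⟩ | ⟨hneg, hpos⟩) hk
      · exact absurd ((hparsign k hk).mp (hpos p1 hp1)) (not_lt.mpr (hneg p2 hp2).le)
      · exact absurd ((hparsign k hk).mpr (hpos p2 hp2)) (not_lt.mpr (hneg p1 hp1).le)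
    · intro hk
      have hd := hsign_dn C1 hpre1 hnz1 hs1 hm1 k hk
      have hu := hsign_up C2 hpre2 hnz2 hs2 hm2 k hk
      rcases (hD k hk).lt_or_gt with hC | hC
      · refine Or.inl ⟨fun p hp => (hd p hp).mpr hC, fun p hp => ?_⟩
        rcases (hnz2 k p hp).lt_or_gt with h' | h'
        · exact h'
        · exact absurd ((hu p hp).mp h') (not_lt.mpr hC.le)
      · refine Or.inr ⟨fun p hp => ?_, fun p hp => (hu p hp).mpr hC⟩
        rcases (hnz1 k p hp).lt_or_gt with h' | h'
        · exact h'
        · exact absurd ((hd p hp).mp h') (not_lt.mpr hC.le)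
  · exact absurd (fun k => by
      by_cases hk : (α k).Parallel (α i)
      · exact hparsign k hk
      · exact (hsign_dn C1 hpre1 hnz1 hs1 hm1 k hk p1 hp1).trans
          (hsign_dn C2 hpre2 hnz2 hs2 hm2 k hk p2 hp2).symm) hsame


/-- Assume `q_∞ ≠ 1`. If `q_∞ · ∏_{H i ∈ P} q i ≠ 1` for every maximal
family `P ⊆ A` of at least two mutually parallel lines, then `A` has no resonant bands,
and consequently `Ker(∇ : ℂ[RB(A)] → ℂ[ch(A)]) = 0`. -/
theorem statement8 {n : ℕ} (α : Fin n → AffForm) (hA : IsArrangement α)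
    (chambers : Finset (Set Pt)) (hch : ∀ C : Set Pt, C ∈ chambers ↔ IsChamber α C)
    (q r : Fin n → ℂ) (hq : ∀ i, q i ≠ 0) (hr0 : ∀ i, r i ≠ 0) (hrq : ∀ i, r i ^ 2 = q i)
    (U1 U2 : Set Pt → Set Pt) (hU : GoodLabel α U1 U2)
    (hqinf : (∏ i, q i)⁻¹ ≠ 1)
    (hnores : ∀ P : Finset (Fin n), MaxParallelFamily α P →
      (∏ i, q i)⁻¹ * ∏ i ∈ P, q i ≠ 1) :
    (∀ B : Set Pt, IsBand α B → Delta α r (U1 B) (U2 B) ≠ 0) ∧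
    LinearMap.ker (nabla α chambers r U1 U2) = ⊥ := by
  have key : ∀ B : Set Pt, IsBand α B → Delta α r (U1 B) (U2 B) ≠ 0 := by
    intro B hB hDelta
    obtain ⟨i, j, hij, hpar, hBeq, hnp⟩ := hB
    obtain ⟨hC1, hC2, hsub1, hsub2, hub1, hub2, hneU⟩ := hU B ⟨i, j, hij, hpar, hBeq, hnp⟩
    have hsub1' : U1 B ⊆ Strip (α i) (α j) := by rw [← hBeq]; exact hsub1
    have hsub2' : U2 B ⊆ Strip (α i) (α j) := by rw [← hBeq]; exact hsub2
    have hnp' : ∀ k : Fin n, (α k).Parallel (α i) →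
        (α k).line ∩ Strip (α i) (α j) = ∅ := by rw [← hBeq]; exact hnp
    have hSep : SepSet α (U1 B) (U2 B) =
        Finset.univ.filter fun k => ¬ (α k).Parallel (α i) :=
      sep_eq α i j hpar hnp' hC1 hC2 hsub1' hsub2' hub1 hub2 hneU
    set P : Finset (Fin n) := Finset.univ.filter (fun k => (α k).Parallel (α i)) with hPdef
    have hPmax : MaxParallelFamily α P := by
      refine ⟨?_, ?_, ?_⟩
      · have hi : i ∈ P := by
          simp only [hPdef, Finset.mem_filter, Finset.mem_univ, true_and]
          exact AffForm.parallel_refl (α i)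
        have hj : j ∈ P := by
          simp only [hPdef, Finset.mem_filter, Finset.mem_univ, true_and]
          exact AffForm.parallel_symm hpar
        exact Finset.one_lt_card.mpr ⟨i, hi, j, hj, hij⟩
      · intro a ha b hb
        simp only [hPdef, Finset.mem_filter, Finset.mem_univ, true_and] at ha hb
        exact AffForm.parallel_trans ha hb
      · rintro k ⟨i', hi', hk⟩
        simp only [hPdef, Finset.mem_filter, Finset.mem_univ, true_and] at hi' ⊢
        exact AffForm.parallel_trans hk (AffForm.parallel_symm hi')
    have hcompl : SepSet α (U1 B) (U2 B) = Pᶜ := by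
      rw [hSep]
      ext k
      simp [hPdef]
    have hprod : (∏ k ∈ P, q k) * ∏ k ∈ SepSet α (U1 B) (U2 B), q k = ∏ k, q k := by
      rw [hcompl]
      exact Finset.prod_mul_prod_compl P q
    unfold Delta at hDelta
    set R : ℂ := ∏ k ∈ SepSet α (U1 B) (U2 B), r k with hRdef
    have hR0 : R ≠ 0 := Finset.prod_ne_zero_iff.mpr fun k _ => hr0 k
    have hRinv : ∏ k ∈ SepSet α (U1 B) (U2 B), (r k)⁻¹ = R⁻¹ := Finset.prod_inv_distrib _
    rw [hRinv] at hDelta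
    have hReq : R = R⁻¹ := sub_eq_zero.mp hDelta
    have hR2 : R ^ 2 = 1 := by
      calc R ^ 2 = R * R := sq R
        _ = R * R⁻¹ := by nth_rewrite 2 [hReq]; rfl
        _ = 1 := mul_inv_cancel₀ hR0
    have hq1 : ∏ k ∈ SepSet α (U1 B) (U2 B), q k = 1 := by
      have hsq : R ^ 2 = ∏ k ∈ SepSet α (U1 B) (U2 B), q k := by
        rw [hRdef, ← Finset.prod_pow]
        exact Finset.prod_congr rfl fun k _ => hrq k
      rw [← hsq, hR2]
    have hqtot : (∏ k, q k) ≠ 0 := Finset.prod_ne_zero_iff.mpr fun k _ => hq k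
    apply hnores P hPmax
    have hPq : ∏ k ∈ P, q k = ∏ k, q k := by
      rw [← hprod, hq1, mul_one]
    rw [hPq, inv_mul_cancel₀ hqtot]
  refine ⟨key, ?_⟩
  have hempty : IsEmpty (RBt α r U1 U2) := ⟨fun B => key B.1 B.2.1 B.2.2⟩
  rw [Submodule.eq_bot_iff]
  intro x hx
  ext B
  exact (hempty.false B).elim

end
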